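/- Let 0 < α ≤ 1. If E_α(i x^α) · E_α(-i x^α) = 1 for all real x ≥ 0, then α = 1. -/

import Mathlib

open Real Finset

-- convexity combo helper
lemma logGamma_combo {x y a b : ℝ} (hx : 0 < x) (hy : 0 < y) (ha : 0 ≤ a) (hb : 0 ≤ b)
    (hab : a + b = 1) :
    Real.log (Real.Gamma (a * x + b * y)) ≤ a * Real.log (Real.Gamma x) + b * Real.log (Real.Gamma y) := by
  have := Real.convexOn_log_Gamma.2 (Set.mem_Ioi.2 hx) (Set.mem_Ioi.2 hy) ha hb hab
  simpa [Function.comp, smul_eq_mul] using this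

lemma Gamma_two' : Real.Gamma 2 = 1 := by
  rw [show (2:ℝ) = 1 + 1 by norm_num, Real.Gamma_add_one one_ne_zero, Real.Gamma_one]; ring

lemma Gamma_three' : Real.Gamma 3 = 2 := by
  rw [show (3:ℝ) = 2 + 1 by norm_num, Real.Gamma_add_one two_ne_zero, Gamma_two']; ring

lemma Gamma_five_half : Real.Gamma (5/2) = 3/4 * Real.sqrt π := by
  rw [show (5/2:ℝ) = 3/2 + 1 by norm_num, Real.Gamma_add_one (by norm_num),
    show (3/2:ℝ) = 1/2 + 1 by norm_num, Real.Gamma_add_one (by norm_num),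
    Real.Gamma_one_half_eq]; ring

lemma gamma_lower (s : ℝ) (hs : 1 ≤ s) : (1/2 : ℝ) ≤ Real.Gamma s := by
  have hspos : 0 < s := lt_of_lt_of_le one_pos hs
  have hG : 0 < Real.Gamma s := Real.Gamma_pos_of_pos hspos
  rcases le_or_gt s 2 with h2 | h2
  · rcases eq_or_lt_of_le h2 with h2e | h2l
    · rw [h2e, Gamma_two']; norm_num
    · -- 2 = a*s + b*3, a = 1/(3-s)
      have h3s : (0:ℝ) < 3 - s := by linarith
      set a : ℝ := 1 / (3 - s) with ha
      have hA : 0 ≤ a := by positivity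
      have hB : 0 ≤ 1 - a := by
        rw [ha]; rw [sub_nonneg, div_le_one h3s]; linarith
      have hcombo := logGamma_combo hspos (by norm_num : (0:ℝ) < 3) hA hB (by ring)
      have hpt : a * s + (1 - a) * 3 = 2 := by
        rw [ha]; field_simp; ring
      rw [hpt, Gamma_two', Real.log_one, Gamma_three'] at hcombo
      -- 0 ≤ a log Γ s + (1-a) log 2 ⇒ log Γ s ≥ -((1-a)/a) log 2 ≥ -log 2
      have h1a : (1 - a)/a = 2 - s := by
        rw [ha]; field_simp; ring
      have hlog : -Real.log 2 ≤ Real.log (Real.Gamma s) := by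
        have hApos : 0 < a := by positivity
        nlinarith [Real.log_pos (by norm_num : (1:ℝ) < 2), mul_pos hApos hApos]
      calc (1/2:ℝ) = Real.exp (-Real.log 2) := by
            rw [Real.exp_neg, Real.exp_log]; norm_num; norm_num
        _ ≤ Real.exp (Real.log (Real.Gamma s)) := Real.exp_le_exp.2 hlog
        _ = Real.Gamma s := Real.exp_log hG
  · -- s > 2 : Γ s ≥ 1
    have h3s : (0:ℝ) < s - 1 := by linarith
    set b : ℝ := 1 / (s - 1) with hb
    have hB : 0 ≤ b := by positivity
    have hA : 0 ≤ 1 - b := by rw [hb, sub_nonneg, div_le_one h3s]; linarith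
    have hcombo := logGamma_combo one_pos hspos hA hB (by ring)
    have hpt : (1 - b) * 1 + b * s = 2 := by rw [hb]; field_simp; ring
    rw [hpt, Gamma_two', Real.log_one, Real.Gamma_one, Real.log_one] at hcombo
    have hbpos : 0 < b := by positivity
    have hlog : 0 ≤ Real.log (Real.Gamma s) := by nlinarith
    calc (1/2:ℝ) ≤ Real.exp 0 := by norm_num
      _ ≤ Real.exp (Real.log (Real.Gamma s)) := Real.exp_le_exp.2 hlog
      _ = Real.Gamma s := Real.exp_log hG

lemma two_f52_lt_log2 : 2 * Real.log (Real.Gamma (5/2)) < Real.log 2 := by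
  have hpi : (0:ℝ) < π := Real.pi_pos
  have hG : Real.Gamma (5/2) = 3/4 * Real.sqrt π := Gamma_five_half
  have hsq : (Real.Gamma (5/2))^2 = 9/16 * π := by
    rw [hG]; rw [mul_pow, sq_sqrt hpi.le]; ring
  have hGpos : 0 < Real.Gamma (5/2) := Real.Gamma_pos_of_pos (by norm_num)
  have h2 : 2 * Real.log (Real.Gamma (5/2)) = Real.log ((Real.Gamma (5/2))^2) := by
    rw [Real.log_pow]; push_cast; ring
  rw [h2, hsq]
  apply Real.log_lt_log (by positivity)
  nlinarith [Real.pi_lt_d2]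

lemma f52_pos : 0 < Real.log (Real.Gamma (5/2)) := by
  apply Real.log_pos
  rw [Gamma_five_half]
  nlinarith [Real.sq_sqrt Real.pi_pos.le, Real.sqrt_nonneg π, Real.pi_gt_three]

lemma strict_ineq {β : ℝ} (h0 : 0 < β) (h1 : β < 1) :
    Real.log (Real.Gamma (1 + 2*β)) < Real.log 2 + 2 * Real.log (Real.Gamma (1 + β)) := by
  set F := fun t => Real.log (Real.Gamma t) with hF
  have hb1 : (0:ℝ) < 1 + β := by linarith
  -- Step 2 : -F(1+β) ≤ (2-2β) * F(5/2)
  have h32 : (0:ℝ) < 3 - 2*β := by linarith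
  have step2 : -F (1 + β) ≤ (2 - 2*β) * F (5/2) := by
    set lam : ℝ := 1 / (3 - 2*β) with hlam
    have hlpos : 0 < lam := by positivity
    have hA : 0 ≤ lam := hlpos.le
    have hB : 0 ≤ 1 - lam := by rw [hlam, sub_nonneg, div_le_one h32]; linarith
    have hc := logGamma_combo hb1 (by norm_num : (0:ℝ) < 5/2) hA hB (by ring)
    have hpt : lam * (1 + β) + (1 - lam) * (5/2) = 2 := by rw [hlam]; field_simp; ring
    rw [hpt, Gamma_two', Real.log_one] at hc
    have key : (1 - lam)/lam = 2 - 2*β := by rw [hlam]; field_simp; ring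
    -- 0 ≤ lam * F(1+β) + (1-lam) * F(5/2)
    have : -(lam * F (1+β)) ≤ (1 - lam) * F (5/2) := by simp only [hF] at hc ⊢; linarith
    have h2 : -F (1+β) ≤ ((1-lam)/lam) * F (5/2) := by
      rw [div_mul_eq_mul_div, le_div_iff₀ hlpos]
      simp only [hF] at this ⊢; nlinarith
    rwa [key] at h2
  -- Step 3 : F(1+2β) ≤ μ F(1+β) + (1-μ) log 2
  have h2b : (0:ℝ) < 2 - β := by linarith
  set mu : ℝ := (2 - 2*β)/(2 - β) with hmu
  have step3 : F (1 + 2*β) ≤ mu * F (1 + β) + (1 - mu) * Real.log 2 := by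
    have hA : 0 ≤ mu := div_nonneg (by linarith) h2b.le
    have hB : 0 ≤ 1 - mu := by rw [hmu, sub_nonneg, div_le_one h2b]; linarith
    have hc := logGamma_combo hb1 (by norm_num : (0:ℝ) < 3) hA hB (by rw [hmu]; field_simp; ring)
    have hpt : mu * (1 + β) + (1 - mu) * 3 = 1 + 2*β := by rw [hmu]; field_simp; ring
    rw [hpt, Gamma_three'] at hc
    exact hc
  -- combine
  have hmu2 : mu - 2 = -(2/(2-β)) := by rw [hmu]; field_simp; ring
  have h1mu : 1 - mu = β/(2-β) := by rw [hmu]; field_simp; ring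
  have key : F (1 + 2*β) - 2 * F (1+β) ≤ (2/(2-β)) * (-F (1+β)) + (β/(2-β)) * Real.log 2 := by
    have hid : mu * F (1+β) - 2 * F (1+β) = (2/(2-β)) * (-F (1+β)) := by
      rw [show mu * F (1+β) - 2*F (1+β) = (mu-2) * F (1+β) from by ring, hmu2]; ring
    have := step3
    rw [h1mu] at this
    linarith
  have bound : (2/(2-β)) * (-F (1+β)) ≤ (2/(2-β)) * ((2 - 2*β) * F (5/2)) := by
    apply mul_le_mul_of_nonneg_left step2 (by positivity)
  have final : (2/(2-β)) * ((2 - 2*β) * F (5/2)) < (2/(2-β)) * ((1 - β) * Real.log 2) := by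
    have h2f := two_f52_lt_log2
    have : (2 - 2*β) * F (5/2) < (1 - β) * Real.log 2 := by nlinarith
    exact mul_lt_mul_of_pos_left this (by positivity)
  have sum1 : (2/(2-β)) * ((1-β) * Real.log 2) + (β/(2-β)) * Real.log 2 = Real.log 2 := by
    field_simp; ring
  simp only [hF] at key bound final ⊢
  nlinarith

lemma coeff_eq (α : ℝ) (hα0 : 0 < α)
    (h : ∀ z : ℝ, 0 ≤ z →
      (∑' k : ℕ, (Complex.I * (z : ℂ)) ^ k / Complex.Gamma ((1 + k * α : ℝ) : ℂ)) *
        (∑' k : ℕ, (-Complex.I * (z : ℂ)) ^ k / Complex.Gamma ((1 + k * α : ℝ) : ℂ)) = 1) :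
    Real.Gamma (1 + 2*α) = 2 * Real.Gamma (1 + α)^2 := by
  set G : ℕ → ℂ := fun k => Complex.Gamma ((1 + k * α : ℝ) : ℂ) with hG
  have hGr : ∀ k : ℕ, G k = ((Real.Gamma (1 + k * α) : ℝ) : ℂ) := fun k =>
    Complex.Gamma_ofReal _
  have hGpos : ∀ k : ℕ, 0 < Real.Gamma (1 + k * α) := fun k =>
    Real.Gamma_pos_of_pos (by positivity)
  have hGhalf : ∀ k : ℕ, (1/2:ℝ) ≤ Real.Gamma (1 + k * α) := fun k =>
    gamma_lower _ (by nlinarith [mul_nonneg (Nat.cast_nonneg (α := ℝ) k) hα0.le])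
  have hGinv : ∀ k : ℕ, ‖(G k)⁻¹‖ ≤ 2 := by
    intro k
    rw [hGr, norm_inv, Complex.norm_real, Real.norm_eq_abs,
      abs_of_pos (hGpos k)]
    rw [inv_le_comm₀ (hGpos k) (by norm_num)]
    simpa using hGhalf k
  have hGne : ∀ k : ℕ, G k ≠ 0 := by
    intro k
    rw [hGr]
    exact_mod_cast (hGpos k).ne'
  -- key: the coefficient A vanishes
  set A : ℂ := (G 1)⁻¹ * (G 1)⁻¹ - 2 * (G 2)⁻¹ with hA
  have hAzero : A = 0 := by
    -- For each z ∈ (0, 1/2], ‖A‖ * z^2 ≤ 40 * z^3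
    have key : ∀ z : ℝ, 0 < z → z ≤ 1/2 → ‖A‖ * z^2 ≤ 40 * z^3 := by
      intro z hz hz2
      set c : ℕ → ℂ := fun k => (Complex.I * (z:ℂ))^k / G k with hc
      set d : ℕ → ℂ := fun k => (-Complex.I * (z:ℂ))^k / G k with hd
      have hnc : ∀ k, ‖c k‖ ≤ 2 * z^k := by
        intro k
        rw [hc]
        simp only [div_eq_mul_inv, norm_mul, norm_pow]
        rw [Complex.norm_I, one_mul, Complex.norm_real, Real.norm_eq_abs, abs_of_pos hz]
        calc z^k * ‖(G k)⁻¹‖ ≤ z^k * 2 := by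
              exact mul_le_mul_of_nonneg_left (hGinv k) (by positivity)
          _ = 2 * z^k := by ring
      have hnd : ∀ k, ‖d k‖ ≤ 2 * z^k := by
        intro k
        rw [hd]
        simp only [div_eq_mul_inv, norm_mul, norm_pow, norm_neg]
        rw [Complex.norm_I, one_mul, Complex.norm_real, Real.norm_eq_abs, abs_of_pos hz]
        calc z^k * ‖(G k)⁻¹‖ ≤ z^k * 2 := by
              exact mul_le_mul_of_nonneg_left (hGinv k) (by positivity)
          _ = 2 * z^k := by ring
      have hsum2z : Summable (fun k : ℕ => 2 * z^k) :=
        (summable_geometric_of_lt_one hz.le (by linarith)).mul_left 2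
      have hsc : Summable (fun k => ‖c k‖) :=
        hsum2z.of_nonneg_of_le (fun k => norm_nonneg _) hnc
      have hsd : Summable (fun k => ‖d k‖) :=
        hsum2z.of_nonneg_of_le (fun k => norm_nonneg _) hnd
      set t : ℕ → ℂ := fun n => ∑ kl ∈ antidiagonal n, c kl.1 * d kl.2 with ht
      have hprod : (∑' k, c k) * (∑' k, d k) = ∑' n, t n :=
        tsum_mul_tsum_eq_tsum_sum_antidiagonal_of_summable_norm hsc hsd
      have hone : (∑' n, t n) = 1 := by
        rw [← hprod]; exact h z hz.le
      have hnt : ∀ n, ‖t n‖ ≤ 4 * (n+1) * z^n := by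
        intro n
        calc ‖t n‖ ≤ ∑ kl ∈ antidiagonal n, ‖c kl.1 * d kl.2‖ := norm_sum_le _ _
          _ ≤ ∑ kl ∈ antidiagonal n, 4 * z^n := by
              apply Finset.sum_le_sum
              intro kl hkl
              have hkl' : kl.1 + kl.2 = n := Finset.HasAntidiagonal.mem_antidiagonal.1 hkl
              rw [norm_mul]
              calc ‖c kl.1‖ * ‖d kl.2‖ ≤ (2 * z^kl.1) * (2 * z^kl.2) := by
                    apply mul_le_mul (hnc _) (hnd _) (norm_nonneg _) (by positivity)
                _ = 4 * z^n := by rw [← hkl']; ring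
          _ = 4 * (n+1) * z^n := by
              rw [Finset.sum_const, Finset.Nat.card_antidiagonal]
              push_cast; ring
      have hst : Summable t := by
        apply Summable.of_norm
        apply Summable.of_nonneg_of_le (fun n => norm_nonneg _) hnt
        have : Summable (fun n : ℕ => 4 * ((n:ℝ)+1) * (1/2:ℝ)^n) := by
          have h1 : Summable (fun n : ℕ => (n:ℝ) * (1/2:ℝ)^n) := by
            have := summable_pow_mul_geometric_of_norm_lt_one (R := ℝ) 1
              (r := 1/2) (by rw [Real.norm_eq_abs, abs_of_pos] <;> norm_num)
            simpa using this
          have h2 : Summable (fun n : ℕ => (1/2:ℝ)^n) :=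
            summable_geometric_of_lt_one (by norm_num) (by norm_num)
          have := (h1.add (h2.mul_left 1)).mul_left 4
          apply this.congr
          intro n; push_cast; ring
        apply this.of_nonneg_of_le (fun n => by positivity)
        intro n
        have : z^n ≤ (1/2:ℝ)^n := pow_le_pow_left₀ hz.le hz2 n
        have h4 : (0:ℝ) ≤ 4 * ((n:ℝ)+1) := by positivity
        exact mul_le_mul_of_nonneg_left this h4
      -- split off first three terms
      have hsplit : (∑ i ∈ range 3, t i) + ∑' i, t (i + 3) = ∑' i, t i :=
        Summable.sum_add_tsum_nat_add 3 hst
      -- compute t 0, t 1, t 2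
      have hanti0 : antidiagonal 0 = ({(0,0)} : Finset (ℕ × ℕ)) := by decide
      have hanti1 : antidiagonal 1 = ({(0,1),(1,0)} : Finset (ℕ × ℕ)) := by decide
      have hanti2 : antidiagonal 2 = ({(0,2),(1,1),(2,0)} : Finset (ℕ × ℕ)) := by decide
      have hG0 : G 0 = 1 := by
        rw [hGr]
        norm_num [Real.Gamma_one]
      have ht0 : t 0 = 1 := by
        rw [ht]; simp only [hanti0, Finset.sum_singleton, hc, hd]
        simp [hG0]
      have ht1 : t 1 = 0 := by
        rw [ht]; simp only [hanti1]
        rw [Finset.sum_insert (by decide), Finset.sum_singleton]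
        simp only [hc, hd, hG0]
        ring_nf
      have ht2 : t 2 = A * (z:ℂ)^2 := by
        rw [ht]; simp only [hanti2]
        rw [Finset.sum_insert (by decide), Finset.sum_insert (by decide),
          Finset.sum_singleton]
        simp only [hc, hd, hG0, hA]
        have hI : Complex.I * Complex.I = -1 := Complex.I_mul_I
        field_simp
        ring_nf
        rw [Complex.I_sq]
        ring
      have hrange : (∑ i ∈ range 3, t i) = 1 + A * (z:ℂ)^2 := by
        rw [Finset.sum_range_succ, Finset.sum_range_succ, Finset.sum_range_one,
          ht0, ht1, ht2]
        ring
      have hT : A * (z:ℂ)^2 = -∑' i, t (i + 3) := by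
        have := hsplit
        rw [hrange, hone] at this
        linear_combination this - 1
      -- bound the tail
      have htail : ‖∑' i, t (i + 3)‖ ≤ 40 * z^3 := by
        have hb : ∀ i : ℕ, ‖t (i+3)‖ ≤ (4 * ((i:ℝ)+4) * (1/2)^i) * z^3 := by
          intro i
          calc ‖t (i+3)‖ ≤ 4 * ((i:ℝ)+3+1) * z^(i+3) := by
                have := hnt (i+3); push_cast at this ⊢; linarith
            _ = (4 * ((i:ℝ)+4)) * (z^i * z^3) := by ring
            _ ≤ (4 * ((i:ℝ)+4)) * ((1/2:ℝ)^i * z^3) := by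
                apply mul_le_mul_of_nonneg_left _ (by positivity)
                exact mul_le_mul_of_nonneg_right (pow_le_pow_left₀ hz.le hz2 i) (by positivity)
            _ = (4 * ((i:ℝ)+4) * (1/2)^i) * z^3 := by ring
        have hsb : Summable (fun i : ℕ => (4 * ((i:ℝ)+4) * (1/2:ℝ)^i) * z^3) := by
          have h1 : Summable (fun n : ℕ => (n:ℝ) * (1/2:ℝ)^n) := by
            have := summable_pow_mul_geometric_of_norm_lt_one (R := ℝ) 1
              (r := 1/2) (by rw [Real.norm_eq_abs, abs_of_pos] <;> norm_num)
            simpa using this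
          have h2 : Summable (fun n : ℕ => (1/2:ℝ)^n) :=
            summable_geometric_of_lt_one (by norm_num) (by norm_num)
          have := ((h1.add (h2.mul_left 4)).mul_left 4).mul_right (z^3)
          apply this.congr
          intro n; push_cast; ring
        have hsnt : Summable (fun i => ‖t (i+3)‖) := by
          apply hsb.of_nonneg_of_le (fun i => norm_nonneg _) hb
        calc ‖∑' i, t (i + 3)‖ ≤ ∑' i, ‖t (i+3)‖ := norm_tsum_le_tsum_norm hsnt
          _ ≤ ∑' i : ℕ, (4 * ((i:ℝ)+4) * (1/2:ℝ)^i) * z^3 := Summable.tsum_le_tsum hb hsnt hsb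
          _ = 40 * z^3 := by
              have h1 : ∑' n : ℕ, (n:ℝ) * (1/2:ℝ)^n = 2 := by
                rw [tsum_coe_mul_geometric_of_norm_lt_one
                  (show ‖(1/2:ℝ)‖ < 1 by rw [Real.norm_eq_abs, abs_of_pos] <;> norm_num)]
                norm_num
              have h2 : ∑' n : ℕ, (1/2:ℝ)^n = 2 := by
                rw [tsum_geometric_of_lt_one (by norm_num) (by norm_num)]
                norm_num
              have h1' : Summable (fun n : ℕ => (n:ℝ) * (1/2:ℝ)^n) := by
                have := summable_pow_mul_geometric_of_norm_lt_one (R := ℝ) 1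
                  (r := 1/2) (by rw [Real.norm_eq_abs, abs_of_pos] <;> norm_num)
                simpa using this
              have h2' : Summable (fun n : ℕ => (1/2:ℝ)^n) :=
                summable_geometric_of_lt_one (by norm_num) (by norm_num)
              have expand : ∀ n : ℕ, (4 * ((n:ℝ)+4) * (1/2:ℝ)^n) * z^3
                  = (4*z^3) * ((n:ℝ) * (1/2:ℝ)^n) + (16*z^3) * (1/2:ℝ)^n := by
                intro n; ring
              rw [tsum_congr expand, Summable.tsum_add (h1'.mul_left _) (h2'.mul_left _),
                tsum_mul_left, tsum_mul_left, h1, h2]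
              ring
      have : ‖A * (z:ℂ)^2‖ ≤ 40 * z^3 := by rw [hT, norm_neg]; exact htail
      rw [norm_mul, norm_pow, Complex.norm_real, Real.norm_eq_abs, abs_of_pos hz] at this
      exact this
    -- now conclude A = 0
    by_contra hne
    have hpos : 0 < ‖A‖ := norm_pos_iff.2 hne
    set z : ℝ := min (1/2) (‖A‖/80) with hzdef
    have hz : 0 < z := lt_min (by norm_num) (by positivity)
    have hz2 : z ≤ 1/2 := min_le_left _ _
    have := key z hz hz2
    have hz3 : z ≤ ‖A‖/80 := min_le_right _ _
    nlinarith [pow_pos hz 2, pow_pos hz 3, sq_nonneg z]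
  -- convert A = 0 to the real equation
  have h1 : G 1 = ((Real.Gamma (1+α) : ℝ) : ℂ) := by rw [hGr]; norm_num
  have h2 : G 2 = ((Real.Gamma (1+2*α) : ℝ) : ℂ) := by rw [hGr]; norm_num
  rw [hA, h1, h2, sub_eq_zero] at hAzero
  have hg1 : (0:ℝ) < Real.Gamma (1+α) := by
    have := hGpos 1; push_cast at this; simpa using this
  have hg2 : (0:ℝ) < Real.Gamma (1+2*α) := by
    have := hGpos 2; push_cast at this; simpa using this
  have hre : (Real.Gamma (1+α))⁻¹ * (Real.Gamma (1+α))⁻¹ = 2 * (Real.Gamma (1+2*α))⁻¹ := by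
    exact_mod_cast hAzero
  field_simp at hre
  rw [mul_comm α 2] at hre
  nlinarith [hre]


/-- If `0 < α ≤ 1` and `E_α(i x^α) E_α(-i x^α) = 1` for all `x ≥ 0`, then `α = 1`. -/
theorem product_eq_one_forces_alpha_eq_one (α : ℝ) (hα0 : 0 < α) (hα1 : α ≤ 1)
    (h : ∀ x : ℝ, 0 ≤ x →
      (∑' k : ℕ, (Complex.I * ((x ^ α : ℝ) : ℂ)) ^ k /
          Complex.Gamma ((1 + k * α : ℝ) : ℂ)) *
        (∑' k : ℕ, (-Complex.I * ((x ^ α : ℝ) : ℂ)) ^ k /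
          Complex.Gamma ((1 + k * α : ℝ) : ℂ)) = 1) :
    α = 1 := by
  have h' : ∀ z : ℝ, 0 ≤ z →
      (∑' k : ℕ, (Complex.I * (z : ℂ)) ^ k / Complex.Gamma ((1 + k * α : ℝ) : ℂ)) *
        (∑' k : ℕ, (-Complex.I * (z : ℂ)) ^ k / Complex.Gamma ((1 + k * α : ℝ) : ℂ)) = 1 := by
    intro z hz
    have hx : (0:ℝ) ≤ z ^ α⁻¹ := Real.rpow_nonneg hz _
    have := h (z ^ α⁻¹) hx
    rwa [Real.rpow_inv_rpow hz hα0.ne'] at this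
  have heq := coeff_eq α hα0 h'
  by_contra hne
  have hlt : α < 1 := lt_of_le_of_ne hα1 hne
  have hkey := strict_ineq hα0 hlt
  have hg1 : 0 < Real.Gamma (1+α) := Real.Gamma_pos_of_pos (by linarith)
  have hg2 : 0 < Real.Gamma (1+2*α) := Real.Gamma_pos_of_pos (by linarith)
  have hlog : Real.log (Real.Gamma (1+2*α)) = Real.log 2 + 2 * Real.log (Real.Gamma (1+α)) := by
    rw [heq, Real.log_mul (by norm_num) (by positivity), Real.log_pow]
    push_cast; ring
  linarith
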